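/- Let P, Q be bounded projections on a Hilbert space H such that P − Q is compact. Then QP : range P → range Q is a Fredholm operator. -/

import Mathlib

set_option linter.unusedSectionVars false

/-- A bounded operator between normed spaces is Fredholm if its kernel is finite
dimensional, its range is closed, and its cokernel is finite dimensional. -/
def IsFredholm {E F : Type} [NormedAddCommGroup E] [NormedSpace ℂ E]
    [NormedAddCommGroup F] [NormedSpace ℂ F] (T : E →L[ℂ] F) : Prop :=
  FiniteDimensional ℂ (LinearMap.ker (T : E →ₗ[ℂ] F)) ∧ IsClosed (Set.range T) ∧
    FiniteDimensional ℂ (F ⧸ LinearMap.range (T : E →ₗ[ℂ] F))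

section Helpers

open Metric Set Filter Topology

variable {H : Type} [NormedAddCommGroup H] [InnerProductSpace ℂ H] [CompleteSpace H]

local notation "⟪" x ", " y "⟫" => @inner ℂ _ _ x y

lemma fix_of_mem_range (P : H →L[ℂ] H) (hP : P.comp P = P) {z : H}
    (hz : z ∈ LinearMap.range (P : H →ₗ[ℂ] H)) : P z = z := by
  obtain ⟨y, rfl⟩ := hz
  simpa using ContinuousLinearMap.ext_iff.1 hP y

lemma isClosed_range_coe (P : H →L[ℂ] H) (hP : P.comp P = P) :
    IsClosed ((LinearMap.range (P : H →ₗ[ℂ] H) : Submodule ℂ H) : Set H) := by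
  have h : ((LinearMap.range (P : H →ₗ[ℂ] H) : Submodule ℂ H) : Set H)
      = ⇑(ContinuousLinearMap.id ℂ H - P) ⁻¹' {0} := by
    ext x
    simp only [SetLike.mem_coe, Set.mem_preimage, ContinuousLinearMap.sub_apply,
      ContinuousLinearMap.id_apply, Set.mem_singleton_iff, sub_eq_zero]
    exact ⟨fun h => (fix_of_mem_range P hP h).symm, fun h => ⟨x, h.symm⟩⟩
  rw [h]
  exact isClosed_singleton.preimage (ContinuousLinearMap.id ℂ H - P).continuous

lemma closed_range_QP (P Q : H →L[ℂ] H) (hP : P.comp P = P)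
    (hcpt : IsCompactOperator (⇑(P - Q))) : IsClosed (Set.range ⇑(Q.comp P)) := by
  set G := Q.comp P with hG
  have hPP : ∀ x, P (P x) = P x := fun x => by
    simpa using ContinuousLinearMap.ext_iff.1 hP x
  have hGP : ∀ x, G (P x) = G x := fun x => by
    simp only [hG, ContinuousLinearMap.comp_apply, hPP]
  have hGker : ∀ x : H, x - P x ∈ LinearMap.ker (G : H →ₗ[ℂ] H) := by
    intro x
    simp only [LinearMap.mem_ker, ContinuousLinearMap.coe_coe, hG,
      ContinuousLinearMap.comp_apply, map_sub, hPP, sub_self, map_zero]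
  set M := (LinearMap.ker (G : H →ₗ[ℂ] H))ᗮ with hM
  haveI : CompleteSpace (LinearMap.ker (G : H →ₗ[ℂ] H)) :=
    (ContinuousLinearMap.isClosed_ker G).completeSpace_coe
  have hsup : LinearMap.ker (G : H →ₗ[ℂ] H) ⊔ M = ⊤ := Submodule.sup_orthogonal_of_hasOrthogonalProjection
  haveI : CompleteSpace M := (Submodule.isClosed_orthogonal _).completeSpace_coe
  -- the key bounded-below estimate
  have key : ∃ c : ℝ, 0 < c ∧ ∀ x ∈ M, c * ‖x‖ ≤ ‖G x‖ := by
    by_contra hcon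
    push_neg at hcon
    have hsel : ∀ n : ℕ, ∃ u : H, u ∈ M ∧ ‖u‖ = 1 ∧ ‖G u‖ < ((n : ℝ) + 1)⁻¹ := by
      intro n
      obtain ⟨x, hxM, hx⟩ := hcon ((n : ℝ) + 1)⁻¹ (by positivity)
      have hx0 : x ≠ 0 := by
        rintro rfl
        simp at hx
      have hxn : ‖x‖ ≠ 0 := norm_ne_zero_iff.2 hx0
      refine ⟨((‖x‖ : ℂ))⁻¹ • x, M.smul_mem _ hxM, ?_, ?_⟩
      · rw [norm_smul]
        simp [norm_inv, inv_mul_cancel₀ hxn]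
      · rw [map_smul, norm_smul]
        simp only [norm_inv, Complex.norm_real, norm_norm, Real.norm_eq_abs, abs_norm]
        calc ‖x‖⁻¹ * ‖G x‖ < ‖x‖⁻¹ * (((n : ℝ) + 1)⁻¹ * ‖x‖) := by
              exact mul_lt_mul_of_pos_left hx (by positivity)
          _ = ((n : ℝ) + 1)⁻¹ := by field_simp
    choose u huM hun huG using hsel
    set K₀ := (P.comp (P - Q)).comp P with hK₀def
    have hK₀ : IsCompactOperator ⇑K₀ := by
      have h1 : IsCompactOperator (⇑(P - Q) ∘ ⇑P) := hcpt.comp_clm P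
      have h2 : IsCompactOperator (⇑P ∘ (⇑(P - Q) ∘ ⇑P)) := h1.clm_comp P
      exact h2
    have hC : IsCompact (closure (⇑K₀ '' Metric.closedBall 0 1)) :=
      hK₀.isCompact_closure_image_closedBall 1
    have hmem : ∀ n, K₀ (u n) ∈ closure (⇑K₀ '' Metric.closedBall 0 1) := fun n =>
      subset_closure ⟨u n, by simp [Metric.mem_closedBall, dist_eq_norm, hun n], rfl⟩
    obtain ⟨z, hzC, φ, hφ, hconv⟩ := hC.tendsto_subseq hmem
    have hPid : ∀ x, P x = K₀ x + P (G x) := by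
      intro x
      simp only [hK₀def, hG, ContinuousLinearMap.comp_apply, map_sub,
        ContinuousLinearMap.sub_apply, hPP]
      abel
    have hinv0 : Tendsto (fun n : ℕ => ((n : ℝ) + 1)⁻¹) atTop (𝓝 0) := by
      simpa [one_div] using (tendsto_one_div_add_atTop_nhds_zero_nat : Tendsto (fun n : ℕ => 1 / ((n : ℝ) + 1)) atTop (𝓝 0))
    have hGu0 : Tendsto (fun n => ‖G (u (φ n))‖) atTop (𝓝 0) := by
      refine squeeze_zero (fun n => norm_nonneg _) (fun n => (huG (φ n)).le.trans ?_) hinv0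
      have hle : (n : ℝ) ≤ (φ n : ℝ) := Nat.cast_le.2 hφ.le_apply
      exact inv_anti₀ (by positivity) (by linarith)
    have hPGu0 : Tendsto (fun n => P (G (u (φ n)))) atTop (𝓝 0) := by
      rw [tendsto_zero_iff_norm_tendsto_zero]
      refine squeeze_zero (fun n => norm_nonneg _)
        (fun n => P.le_opNorm _) ?_
      simpa using hGu0.const_mul ‖P‖
    have hPtend : Tendsto (fun n => P (u (φ n))) atTop (𝓝 z) := by
      have heq : (fun n => P (u (φ n)))
          = fun n => K₀ (u (φ n)) + P (G (u (φ n))) := funext fun n => hPid _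
      rw [heq]
      simpa using hconv.add hPGu0
    have hzE : z ∈ LinearMap.range (P : H →ₗ[ℂ] H) := by
      have : IsClosed ((LinearMap.range (P : H →ₗ[ℂ] H) : Submodule ℂ H) : Set H) :=
        isClosed_range_coe P hP
      exact this.mem_of_tendsto hPtend (Eventually.of_forall fun n => ⟨u (φ n), rfl⟩)
    have hzker : z ∈ LinearMap.ker (G : H →ₗ[ℂ] H) := by
      have h1 : Tendsto (fun n => G (P (u (φ n)))) atTop (𝓝 (G z)) :=
        (G.continuous.tendsto z).comp hPtend
      have h2 : Tendsto (fun n => G (P (u (φ n)))) atTop (𝓝 0) := by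
        simp only [hGP]
        exact tendsto_zero_iff_norm_tendsto_zero.2 hGu0
      simpa [LinearMap.mem_ker] using tendsto_nhds_unique h1 h2
    have horto : ∀ n, ⟪u n, P (u n)⟫ = 1 := by
      intro n
      have h1 : ⟪u n, u n⟫ = 1 := by
        rw [inner_self_eq_norm_sq_to_K (𝕜 := ℂ), hun n]
        norm_num
      have h2 : ⟪u n, u n - P (u n)⟫ = 0 := by
        rw [← inner_eq_zero_symm]
        exact (Submodule.mem_orthogonal _ _).1 (huM n) _ (hGker (u n))
      have h4 := inner_sub_right (𝕜 := ℂ) (u n) (u n) (P (u n))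
      rw [h2] at h4
      have h3 : ⟪u n, P (u n)⟫ = ⟪u n, u n⟫ := by linear_combination h4
      rw [h3, h1]
    have hz0 : ∀ n, ⟪u n, z⟫ = 0 := fun n => by
      rw [← inner_eq_zero_symm]
      exact (Submodule.mem_orthogonal _ _).1 (huM n) _ hzker
    have hge : ∀ n, (1 : ℝ) ≤ ‖P (u (φ n)) - z‖ := by
      intro n
      have h1 : ⟪u (φ n), P (u (φ n)) - z⟫ = 1 := by
        rw [inner_sub_right, horto, hz0, sub_zero]
      calc (1 : ℝ) = ‖⟪u (φ n), P (u (φ n)) - z⟫‖ := by rw [h1]; simp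
        _ ≤ ‖u (φ n)‖ * ‖P (u (φ n)) - z‖ := norm_inner_le_norm _ _
        _ = ‖P (u (φ n)) - z‖ := by rw [hun]; ring
    obtain ⟨N, hN⟩ := Metric.tendsto_atTop.1 hPtend 1 one_pos
    exact absurd ((hge N).trans_lt (by simpa [dist_eq_norm] using hN N le_rfl)) (lt_irrefl 1)
  obtain ⟨c, hc, hbound⟩ := key
  set g := G.comp M.subtypeL with hg
  have hanti : AntilipschitzWith (⟨c, hc.le⟩ : NNReal)⁻¹ ⇑g := by
    refine g.antilipschitz_of_bound fun x => ?_
    have hx := hbound x.1 x.2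
    have : ‖(x : H)‖ ≤ c⁻¹ * ‖G (x : H)‖ := by
      rw [le_inv_mul_iff₀ hc]
      exact hx
    have e : (((⟨c, hc.le⟩ : NNReal)⁻¹ : NNReal) : ℝ) = c⁻¹ := by
      exact NNReal.coe_inv _
    rw [e]
    simpa [hg, ContinuousLinearMap.comp_apply] using this
  have hcr : IsClosed (Set.range ⇑g) := hanti.isClosed_range g.uniformContinuous
  have hre : Set.range ⇑g = Set.range ⇑G := by
    ext y
    constructor
    · rintro ⟨x, rfl⟩
      exact ⟨x.1, rfl⟩
    · rintro ⟨x, rfl⟩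
      have hx : x ∈ LinearMap.ker (G : H →ₗ[ℂ] H) ⊔ M := by rw [hsup]; trivial
      obtain ⟨a, ha, b, hb, rfl⟩ := Submodule.mem_sup.1 hx
      refine ⟨⟨b, hb⟩, ?_⟩
      have : G a = 0 := ha
      simp [hg, map_add, this]
  rwa [hre] at hcr

/-- A closed subspace on which the norm is dominated by a compact operator is
finite dimensional. -/
lemma findim_of_compact_bound (V : Submodule ℂ H) (hVc : IsClosed (V : Set H))
    (K : H →L[ℂ] H) (hK : IsCompactOperator ⇑K) (hb : ∀ v ∈ V, ‖v‖ ≤ ‖K v‖) :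
    FiniteDimensional ℂ V := by
  set B : Set H := (V : Set H) ∩ Metric.closedBall 0 1 with hB
  have hBc : IsClosed B := hVc.inter Metric.isClosed_closedBall
  have hCcpt : IsCompact (closure (⇑K '' Metric.closedBall 0 1)) :=
    hK.isCompact_closure_image_closedBall 1
  have hKB : TotallyBounded (⇑K '' B) := by
    refine TotallyBounded.subset ?_ hCcpt.totallyBounded
    exact (Set.image_mono Set.inter_subset_right).trans subset_closure
  have hBtb : TotallyBounded B := by
    rw [Metric.totallyBounded_iff]
    intro ε hε
    obtain ⟨t, hts, htf, hcover⟩ := totallyBounded_iff_subset.1 hKB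
      {p : H × H | dist p.1 p.2 < ε} (Metric.dist_mem_uniformity hε)
    have hex : ∀ y : H, ∃ b : H, y ∈ t → b ∈ B ∧ K b = y := by
      intro y
      by_cases hy : y ∈ t
      · obtain ⟨b, hbB, hbK⟩ := hts hy
        exact ⟨b, fun _ => ⟨hbB, hbK⟩⟩
      · exact ⟨0, fun h => absurd h hy⟩
    choose g hg using hex
    refine ⟨g '' t, htf.image g, ?_⟩
    intro b hbB
    obtain ⟨y, hyt, hy⟩ : ∃ y ∈ t, dist (K b) y < ε := by
      have := hcover (Set.mem_image_of_mem _ hbB)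
      simpa using this
    obtain ⟨hgB, hgK⟩ := hg y hyt
    have hsub : b - g y ∈ V := V.sub_mem hbB.1 hgB.1
    have : ‖b - g y‖ ≤ ‖K (b - g y)‖ := hb _ hsub
    have hdist : dist b (g y) < ε := by
      rw [dist_eq_norm]
      refine lt_of_le_of_lt this ?_
      rw [map_sub, hgK, ← dist_eq_norm]
      exact hy
    exact Set.mem_biUnion (Set.mem_image_of_mem _ hyt) hdist
  have hBcpt : IsCompact B := hBtb.isCompact_of_isClosed hBc
  refine FiniteDimensional.of_isCompact_closedBall₀ (𝕜 := ℂ) one_pos (?_ : IsCompact (Metric.closedBall (0 : V) 1))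
  rw [Topology.IsEmbedding.isCompact_iff Topology.IsEmbedding.subtypeVal]
  have : Subtype.val '' (Metric.closedBall (0 : V) 1) = B := by
    ext x
    constructor
    · rintro ⟨⟨v, hv⟩, hvb, rfl⟩
      refine ⟨hv, ?_⟩
      simpa [Metric.mem_closedBall, dist_eq_norm] using (by simpa [Metric.mem_closedBall, dist_eq_norm] using hvb : ‖(⟨v, hv⟩ : V)‖ ≤ 1)
    · rintro ⟨hxV, hx1⟩
      refine ⟨⟨x, hxV⟩, ?_, rfl⟩
      simpa [Metric.mem_closedBall, dist_eq_norm] using (by simpa [Metric.mem_closedBall, dist_eq_norm] using hx1 : ‖x‖ ≤ 1)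
  rw [this]
  exact hBcpt

theorem fredholm_pair_of_compact_difference'
    (P Q : H →L[ℂ] H) (hP : P.comp P = P) (hQ : Q.comp Q = Q)
    (hcpt : IsCompactOperator (⇑(P - Q))) :
    FiniteDimensional ℂ (LinearMap.ker ((((Q.comp P).comp (LinearMap.range (P : H →ₗ[ℂ] H)).subtypeL).codRestrict
      (LinearMap.range (Q : H →ₗ[ℂ] H)) (fun x => LinearMap.mem_range_self (Q : H →ₗ[ℂ] H) (P (x : H)))) : ↥(LinearMap.range (P : H →ₗ[ℂ] H)) →ₗ[ℂ] ↥(LinearMap.range (Q : H →ₗ[ℂ] H)))) ∧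
    IsClosed (Set.range (((Q.comp P).comp (LinearMap.range (P : H →ₗ[ℂ] H)).subtypeL).codRestrict
      (LinearMap.range (Q : H →ₗ[ℂ] H)) (fun x => LinearMap.mem_range_self (Q : H →ₗ[ℂ] H) (P (x : H))))) ∧
    FiniteDimensional ℂ (↥(LinearMap.range (Q : H →ₗ[ℂ] H)) ⧸ LinearMap.range ((((Q.comp P).comp (LinearMap.range (P : H →ₗ[ℂ] H)).subtypeL).codRestrict
      (LinearMap.range (Q : H →ₗ[ℂ] H)) (fun x => LinearMap.mem_range_self (Q : H →ₗ[ℂ] H) (P (x : H)))) : ↥(LinearMap.range (P : H →ₗ[ℂ] H)) →ₗ[ℂ] ↥(LinearMap.range (Q : H →ₗ[ℂ] H)))) := by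
  classical
  set T := ((Q.comp P).comp (LinearMap.range (P : H →ₗ[ℂ] H)).subtypeL).codRestrict
      (LinearMap.range (Q : H →ₗ[ℂ] H)) (fun x => LinearMap.mem_range_self (Q : H →ₗ[ℂ] H) (P (x : H))) with hTdef
  set G := Q.comp P with hGdef
  have hPP : ∀ x, P (P x) = P x := fun x => by
    simpa using ContinuousLinearMap.ext_iff.1 hP x
  have hGP : ∀ x, G (P x) = G x := fun x => by
    simp only [hGdef, ContinuousLinearMap.comp_apply, hPP]
  have hTval : ∀ x : ↥(LinearMap.range (P : H →ₗ[ℂ] H)), ((T x : ↥(LinearMap.range (Q : H →ₗ[ℂ] H))) : H) = G (x : H) :=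
    fun x => rfl
  -- Part 1 : the kernel is finite dimensional
  have part1 : FiniteDimensional ℂ (LinearMap.ker (T : ↥(LinearMap.range (P : H →ₗ[ℂ] H)) →ₗ[ℂ] ↥(LinearMap.range (Q : H →ₗ[ℂ] H)))) := by
    set S₁ := LinearMap.ker ((ContinuousLinearMap.id ℂ H - (P - Q) : H →L[ℂ] H) : H →ₗ[ℂ] H) with hS₁
    haveI hS₁fd : FiniteDimensional ℂ S₁ := by
      refine findim_of_compact_bound S₁ (ContinuousLinearMap.isClosed_ker _) (P - Q) hcpt ?_
      intro v hv
      have hv' : (P - Q) v = v := by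
        have := hv
        simp only [hS₁, LinearMap.mem_ker, ContinuousLinearMap.coe_coe,
          ContinuousLinearMap.sub_apply, ContinuousLinearMap.id_apply, sub_eq_zero] at this
        exact this.symm
      rw [hv']
    have hmem : ∀ x : LinearMap.ker (T : ↥(LinearMap.range (P : H →ₗ[ℂ] H)) →ₗ[ℂ] ↥(LinearMap.range (Q : H →ₗ[ℂ] H))), (((x : ↥(LinearMap.range (P : H →ₗ[ℂ] H))) : H)) ∈ S₁ := by
      intro x
      have hx0 : T x.1 = 0 := x.2
      have hGx : G ((x.1 : H)) = 0 := by
        have h := congrArg (Subtype.val) hx0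
        rw [hTval x.1] at h
        simpa using h
      have hPx : P (x.1 : H) = (x.1 : H) := fix_of_mem_range P hP x.1.2
      have hQx : Q (x.1 : H) = 0 := by
        have : G (P (x.1 : H)) = 0 := by rw [hGP]; exact hGx
        rw [hPx] at this
        rw [← hPx]
        calc Q (P (x.1:H)) = G (x.1:H) := rfl
          _ = 0 := hGx
      simp only [hS₁, LinearMap.mem_ker, ContinuousLinearMap.coe_coe,
        ContinuousLinearMap.sub_apply, ContinuousLinearMap.id_apply,
        ContinuousLinearMap.sub_apply, hPx, hQx, sub_zero, sub_self]
    let j : ↥(LinearMap.ker (T : ↥(LinearMap.range (P : H →ₗ[ℂ] H)) →ₗ[ℂ] ↥(LinearMap.range (Q : H →ₗ[ℂ] H)))) →ₗ[ℂ] ↥S₁ :=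
      LinearMap.codRestrict S₁
        ((LinearMap.range (P : H →ₗ[ℂ] H)).subtype ∘ₗ (LinearMap.ker (T : ↥(LinearMap.range (P : H →ₗ[ℂ] H)) →ₗ[ℂ] ↥(LinearMap.range (Q : H →ₗ[ℂ] H)))).subtype) hmem
    have hj : Function.Injective j := by
      intro a b hab
      have h := congrArg (Subtype.val) hab
      simp only [j, LinearMap.codRestrict_apply, LinearMap.comp_apply,
        Submodule.subtype_apply] at h
      exact Subtype.ext (Subtype.ext h)
    exact FiniteDimensional.of_injective j hj
  -- Part 2 : closed range
  have hclosedG : IsClosed (Set.range ⇑G) := closed_range_QP P Q hP hcpt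
  have hrange : Set.range ⇑T
      = (Subtype.val : ↥(LinearMap.range (Q : H →ₗ[ℂ] H)) → H) ⁻¹' Set.range ⇑G := by
    ext f
    constructor
    · rintro ⟨x, rfl⟩
      exact ⟨(x : H), (hTval x).symm⟩
    · rintro ⟨x, hx⟩
      refine ⟨⟨P x, LinearMap.mem_range_self _ _⟩, Subtype.ext ?_⟩
      rw [hTval]
      simpa [hGP] using hx
  have part2 : IsClosed (Set.range ⇑T) := by
    rw [hrange]
    exact hclosedG.preimage continuous_subtype_val
  refine ⟨part1, part2, ?_⟩
  -- Part 3 : finite dimensional cokernel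
  haveI : CompleteSpace ↥(LinearMap.range (Q : H →ₗ[ℂ] H)) := (isClosed_range_coe Q hQ).completeSpace_coe
  set RT := LinearMap.range (T : ↥(LinearMap.range (P : H →ₗ[ℂ] H)) →ₗ[ℂ] ↥(LinearMap.range (Q : H →ₗ[ℂ] H))) with hRT
  have hRTc : IsClosed ((RT : Submodule ℂ ↥(LinearMap.range (Q : H →ₗ[ℂ] H))) : Set ↥(LinearMap.range (Q : H →ₗ[ℂ] H))) := by
    have h : ((RT : Submodule ℂ ↥(LinearMap.range (Q : H →ₗ[ℂ] H))) : Set ↥(LinearMap.range (Q : H →ₗ[ℂ] H)))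
        = Set.range ⇑T := by
      ext y
      simp [hRT, LinearMap.mem_range, Set.mem_range]
    rw [h]; exact part2
  haveI : CompleteSpace RT := hRTc.completeSpace_coe
  have hsup : RT ⊔ RTᗮ = ⊤ := Submodule.sup_orthogonal_of_hasOrthogonalProjection
  set A := ContinuousLinearMap.adjoint G with hA
  set V₀ := LinearMap.ker ((ContinuousLinearMap.id ℂ H - Q : H →L[ℂ] H) : H →ₗ[ℂ] H) ⊓ LinearMap.ker (A : H →ₗ[ℂ] H) with hV₀
  set K' := (Q - P).comp (ContinuousLinearMap.id ℂ H - P) with hK'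
  have hK'c : IsCompactOperator ⇑K' := by
    have h2 : IsCompactOperator (fun x => -((P - Q) x)) := hcpt.neg
    have h3 : IsCompactOperator ⇑(Q - P) := by
      convert h2 using 1
      funext x
      simp
    exact h3.comp_clm (ContinuousLinearMap.id ℂ H - P)
  have hK'eq : K' = Q - G := by
    ext x
    simp only [hK', hGdef, ContinuousLinearMap.comp_apply, ContinuousLinearMap.sub_apply,
      ContinuousLinearMap.id_apply, map_sub, hPP]
    abel
  haveI hV₀fd : FiniteDimensional ℂ V₀ := by
    refine findim_of_compact_bound V₀ ?_ K' hK'c ?_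
    · have h : ((V₀ : Submodule ℂ H) : Set H)
          = (LinearMap.ker ((ContinuousLinearMap.id ℂ H - Q : H →L[ℂ] H) : H →ₗ[ℂ] H) : Set H) ∩
            (LinearMap.ker (A : H →ₗ[ℂ] H) : Set H) := by
        rw [hV₀]; rfl
      rw [h]
      exact (ContinuousLinearMap.isClosed_ker _).inter (ContinuousLinearMap.isClosed_ker _)
    · rintro v hv
      obtain ⟨hv1, hv2⟩ := Submodule.mem_inf.1 hv
      have hQv : Q v = v := by
        have := hv1
        simp only [LinearMap.mem_ker, ContinuousLinearMap.coe_coe,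
          ContinuousLinearMap.sub_apply, ContinuousLinearMap.id_apply, sub_eq_zero] at this
        exact this.symm
      have hAv : A v = 0 := hv2
      have hadj : ContinuousLinearMap.adjoint (Q - G) v = ContinuousLinearMap.adjoint Q v := by
        rw [map_sub]
        simp only [ContinuousLinearMap.sub_apply, ← hA, hAv, sub_zero]
      have hinner : (inner ℂ v v : ℂ) = inner ℂ (K' v) v := by
        calc (inner ℂ v v : ℂ) = inner ℂ (Q v) v := by rw [hQv]
          _ = inner ℂ v (ContinuousLinearMap.adjoint Q v) :=
              (ContinuousLinearMap.adjoint_inner_right Q v v).symm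
          _ = inner ℂ v (ContinuousLinearMap.adjoint (Q - G) v) := by rw [hadj]
          _ = inner ℂ ((Q - G) v) v := ContinuousLinearMap.adjoint_inner_right _ v v
          _ = inner ℂ (K' v) v := by rw [hK'eq]
      by_cases hv0 : v = 0
      · simp [hv0]
      · have hvn : 0 < ‖v‖ := norm_pos_iff.2 hv0
        have h5 : ‖v‖ * ‖v‖ ≤ ‖K' v‖ * ‖v‖ := by
          calc ‖v‖ * ‖v‖ = ‖(inner ℂ v v : ℂ)‖ := by
                rw [inner_self_eq_norm_sq_to_K (𝕜 := ℂ)]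
                simp [sq]
            _ = ‖(inner ℂ (K' v) v : ℂ)‖ := by rw [hinner]
            _ ≤ ‖K' v‖ * ‖v‖ := norm_inner_le_norm _ _
        exact le_of_mul_le_mul_right h5 hvn
  have hmemV : ∀ w : ↥(RTᗮ), (((w : ↥(LinearMap.range (Q : H →ₗ[ℂ] H))) : H)) ∈ V₀ := by
    intro w
    refine Submodule.mem_inf.2 ⟨?_, ?_⟩
    · have := fix_of_mem_range Q hQ (w : ↥(LinearMap.range (Q : H →ₗ[ℂ] H))).2
      simp only [LinearMap.mem_ker, ContinuousLinearMap.coe_coe,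
        ContinuousLinearMap.sub_apply, ContinuousLinearMap.id_apply, this, sub_self]
    · have horth : ∀ x : H, (inner ℂ (G x) ((w : ↥(LinearMap.range (Q : H →ₗ[ℂ] H))) : H) : ℂ) = 0 := by
        intro x
        have hmemRT : T ⟨P x, LinearMap.mem_range_self _ _⟩ ∈ RT :=
          LinearMap.mem_range_self _ _
        have h0 := (Submodule.mem_orthogonal _ _).1 w.2 _ hmemRT
        rw [Submodule.coe_inner] at h0
        rw [hTval] at h0
        simpa [hGP] using h0
      have hall : ∀ x : H, (inner ℂ x (A ((w : ↥(LinearMap.range (Q : H →ₗ[ℂ] H))) : H)) : ℂ) = 0 := by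
        intro x
        rw [hA, ContinuousLinearMap.adjoint_inner_right]
        exact horth x
      have := hall (A ((w : ↥(LinearMap.range (Q : H →ₗ[ℂ] H))) : H))
      simpa [LinearMap.mem_ker] using inner_self_eq_zero.1 this
  let ι : ↥(RTᗮ) →ₗ[ℂ] ↥V₀ :=
    LinearMap.codRestrict V₀
      ((LinearMap.range (Q : H →ₗ[ℂ] H)).subtype ∘ₗ (RTᗮ).subtype) hmemV
  haveI : FiniteDimensional ℂ ↥(RTᗮ) := by
    refine FiniteDimensional.of_injective ι ?_
    intro a b hab
    have h := congrArg (Subtype.val) hab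
    simp only [ι, LinearMap.codRestrict_apply, LinearMap.comp_apply,
      Submodule.subtype_apply] at h
    exact Subtype.ext (Subtype.ext h)
  have hbot : Submodule.map RT.mkQ RT = ⊥ := by
    rw [eq_bot_iff]
    rintro x ⟨y, hy, rfl⟩
    simp [Submodule.mkQ_apply, (Submodule.Quotient.mk_eq_zero _).2 hy]
  have hmap : Submodule.map RT.mkQ (RTᗮ) = ⊤ := by
    have h1 : Submodule.map RT.mkQ (RT ⊔ RTᗮ) = ⊤ := by
      rw [hsup, Submodule.map_top, Submodule.range_mkQ]
    rwa [Submodule.map_sup, hbot, bot_sup_eq] at h1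
  have hsurj : Function.Surjective (RT.mkQ ∘ₗ (RTᗮ).subtype) := by
    rw [← LinearMap.range_eq_top, LinearMap.range_comp, Submodule.range_subtype]
    exact hmap
  exact Module.Finite.of_surjective _ hsurj

end Helpers

/-- If `P, Q` are bounded projections on a Hilbert space with `P − Q` compact, then
`QP : range P → range Q` is a Fredholm operator. -/
theorem fredholm_pair_of_compact_difference
    {H : Type} [NormedAddCommGroup H] [InnerProductSpace ℂ H] [CompleteSpace H]
    (P Q : H →L[ℂ] H) (hP : P.comp P = P) (hQ : Q.comp Q = Q)
    (hcpt : IsCompactOperator (⇑(P - Q))) :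
    IsFredholm (((Q.comp P).comp (LinearMap.range (P : H →ₗ[ℂ] H)).subtypeL).codRestrict
      (LinearMap.range (Q : H →ₗ[ℂ] H)) (fun x => LinearMap.mem_range_self (Q : H →ₗ[ℂ] H) (P (x : H)))) := by
  have h := fredholm_pair_of_compact_difference' P Q hP hQ hcpt
  exact ⟨h.1, h.2.1, h.2.2⟩
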